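/- Fix μ̃ > 0, σ > 0, θ̃ ∈ ℝ, S₀ > 0 and T > 0, and define the XOU futures curve f(T) := exp( e^{−μ̃T}·ln S₀ + (1 − e^{−μ̃T})(θ̃ − σ²/(2μ̃)) + (σ²/(4μ̃))(1 − e^{−2μ̃T}) ). If ln S₀ < θ̃ − (σ²/(2μ̃))(1 − e^{−μ̃T}) − ( e^{2μ̃T}/4 + σ²/(2μ̃) )^{1/2} − e^{μ̃T}/2, then the first derivative of f at T is strictly positive and the second derivative of f at T is strictly positive (the futures curve is upward-sloping and convex at T). -/

import Mathlib

open Real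

/-- XOU futures term structure: upward-sloping and convex when ln S₀ is below the lower threshold. -/
theorem xou_term_structure_up_convex (μt θt σ S0 T : ℝ) (hμ : 0 < μt) (hσ : 0 < σ) (hS : 0 < S0)
    (hT : 0 < T) (f : ℝ → ℝ)
    (hf : f = fun T : ℝ => exp (exp (-μt * T) * log S0
      + (1 - exp (-μt * T)) * (θt - σ ^ 2 / (2 * μt))
      + σ ^ 2 / (4 * μt) * (1 - exp (-2 * μt * T))))
    (hln : log S0 < θt - σ ^ 2 / (2 * μt) * (1 - exp (-μt * T)) - Real.sqrt (exp (2 * μt * T) / 4 + σ ^ 2 / (2 * μt)) - exp (μt * T) / 2) :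
    0 < deriv f T ∧ 0 < deriv (deriv f) T := by
  have hx : ∀ c t : ℝ, HasDerivAt (fun s : ℝ => exp (c * s)) (c * exp (c * t)) t := by
    intro c t
    simpa [mul_comm] using (HasDerivAt.const_mul c (hasDerivAt_id t)).exp
  set x := log S0 with hxdef
  set A : ℝ := θt - σ ^ 2 / (2 * μt) with hAdef
  set B : ℝ := σ ^ 2 / (4 * μt) with hBdef
  set g : ℝ → ℝ := fun t => exp (-μt * t) * x + (1 - exp (-μt * t)) * A
      + B * (1 - exp (-2 * μt * t)) with hgdef
  set g1 : ℝ → ℝ := fun t => μt * (A - x) * exp (-μt * t)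
      + 2 * μt * B * exp (-2 * μt * t) with hg1def
  set g2 : ℝ → ℝ := fun t => -(μt ^ 2) * (A - x) * exp (-μt * t)
      - 4 * μt ^ 2 * B * exp (-2 * μt * t) with hg2def
  have hgd : ∀ t, HasDerivAt g (g1 t) t := by
    intro t
    have h1 := (hx (-μt) t).mul_const x
    have h2 := ((hasDerivAt_const t (1 : ℝ)).sub (hx (-μt) t)).mul_const A
    have h3 := HasDerivAt.const_mul B ((hasDerivAt_const t (1 : ℝ)).sub (hx (-2 * μt) t))
    have h := (h1.add h2).add h3
    refine h.congr_deriv ?_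
    simp only [hg1def]
    ring
  have hg1d : ∀ t, HasDerivAt g1 (g2 t) t := by
    intro t
    have h1 := HasDerivAt.const_mul (μt * (A - x)) (hx (-μt) t)
    have h2 := HasDerivAt.const_mul (2 * μt * B) (hx (-2 * μt) t)
    have h := h1.add h2
    refine h.congr_deriv ?_
    simp only [hg2def]
    ring
  have hfg : f = fun t => exp (g t) := hf
  have hfd : ∀ t, HasDerivAt f (exp (g t) * g1 t) t := by
    intro t
    rw [hfg]
    exact (hgd t).exp
  have hd1 : deriv f = fun t => exp (g t) * g1 t := funext fun t => (hfd t).deriv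
  have hfd2 : HasDerivAt (fun t => exp (g t) * g1 t)
      (exp (g T) * g1 T * g1 T + exp (g T) * g2 T) T := ((hgd T).exp).mul (hg1d T)
  have hder1 : deriv f T = exp (g T) * g1 T := (hfd T).deriv
  have hder2 : deriv (deriv f) T = exp (g T) * g1 T * g1 T + exp (g T) * g2 T := by
    rw [hd1]; exact hfd2.deriv
  rw [hder1, hder2]
  -- abbreviations
  set e1 := exp (-μt * T) with he1def
  set em := exp (μt * T) with hemdef
  have he1 : (0:ℝ) < e1 := by rw [he1def]; exact exp_pos _
  have hem : (0:ℝ) < em := by rw [hemdef]; exact exp_pos _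
  have hprod : em * e1 = 1 := by
    rw [hemdef, he1def, ← exp_add]; norm_num
  have he2 : exp (-2 * μt * T) = e1 ^ 2 := by
    rw [he1def, sq, ← exp_add]; ring_nf
  have hem2 : exp (2 * μt * T) = em ^ 2 := by
    rw [hemdef, sq, ← exp_add]; ring_nf
  set s := Real.sqrt (exp (2 * μt * T) / 4 + σ ^ 2 / (2 * μt)) with hsdef
  have hsnn : (0:ℝ) ≤ s := Real.sqrt_nonneg _
  have hB2 : σ ^ 2 / (2 * μt) = 2 * B := by
    rw [hBdef]; field_simp; ring
  have hssq : s ^ 2 = exp (2 * μt * T) / 4 + σ ^ 2 / (2 * μt) := by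
    rw [hsdef, sq_sqrt]
    positivity
  have hs2 : s ^ 2 = em ^ 2 / 4 + 2 * B := by rw [hssq, hem2, hB2]
  -- rewrite hln
  have hln' : x < A + 2 * B * e1 - s - em / 2 := by
    have h1 : θt - σ ^ 2 / (2 * μt) * (1 - e1) = A + 2 * B * e1 := by
      rw [hAdef, hB2]; ring
    rw [h1] at hln
    exact hln
  have hg1T : g1 T = μt * (A - x) * e1 + 2 * μt * B * e1 ^ 2 := by
    simp only [hg1def]
    rw [he2, ← he1def]
  have hg2T : g2 T = -(μt ^ 2) * (A - x) * e1 - 4 * μt ^ 2 * B * e1 ^ 2 := by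
    simp only [hg2def]
    rw [he2, ← he1def]
  set G1 := g1 T with hG1
  set G2 := g2 T with hG2
  set E := exp (g T) with hE
  have hEpos : 0 < E := by rw [hE]; exact exp_pos _
  clear hln hgd hg1d hfd hfd2 hd1 hder1 hder2 hg1def hg2def hgdef hfg hf
  clear_value x A B e1 em s G1 G2 E g g1 g2
  clear hE hG1 hG2 g g1 g2 hx hssq hsdef hemdef he1def hxdef
  have hw : s + em / 2 < A - x + 2 * B * e1 := by linarith
  have hw0 : (0:ℝ) < A - x + 2 * B * e1 := by
    nlinarith [hw, hsnn, hem]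
  have hg1Tpos : 0 < G1 := by
    rw [hg1T]
    nlinarith [mul_pos (mul_pos hμ he1) hw0]
  constructor
  · exact mul_pos hEpos hg1Tpos
  · have key : s ^ 2 < (A - x + 2 * B * e1 - em / 2) ^ 2 := by
      nlinarith [hw, hsnn]
    have heq : G1 * G1 + G2
        = μt ^ 2 * e1 ^ 2 * ((A - x + 2 * B * e1 - em / 2) ^ 2 - s ^ 2) := by
      rw [hg1T, hg2T, hs2]
      linear_combination (μt ^ 2 * (A - x) * e1 + 2 * μt ^ 2 * B * e1 ^ 2) * hprod
    have hpos2 : 0 < G1 * G1 + G2 := by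
      rw [heq]
      have h1 : 0 < μt ^ 2 * e1 ^ 2 := by positivity
      have h2 : 0 < (A - x + 2 * B * e1 - em / 2) ^ 2 - s ^ 2 := by linarith
      exact mul_pos h1 h2
    have hre : E * G1 * G1 + E * G2 = E * (G1 * G1 + G2) := by ring
    rw [hre]
    exact mul_pos hEpos hpos2
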